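/- Let H(λ) = J³(0) + λV where V is an arbitrary real 3×3 matrix with lower-left entry V₃₁ = γ ≠ 0. Then for all sufficiently small λ > 0 the matrix H(λ) has at least one pair of non-real complex-conjugate eigenvalues; more precisely, its three eigenvalues satisfy E_k = ω^k γ^{1/3} λ^{1/3} (1 + O(λ^{1/3})) where ω = e^{2πi/3}. -/

import Mathlib

open Matrix Polynomial Filter Asymptotics Complex

noncomputable def nrRoot (p : Polynomial ℂ) (t : ℂ) : ℂ :=
  if h : p.roots.toFinset.Nonempty then
    (Finset.exists_min_image p.roots.toFinset (fun r => dist t r) h).choose else 0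

lemma nrRoot_spec {p : Polynomial ℂ} (h : p.roots ≠ 0) (t : ℂ) :
    nrRoot p t ∈ p.roots ∧ ∀ s ∈ p.roots, dist t (nrRoot p t) ≤ dist t s := by
  have hne : p.roots.toFinset.Nonempty := by
    rw [Multiset.toFinset_nonempty]; exact h
  rw [nrRoot, dif_pos hne]
  obtain ⟨hmem, hmin⟩ :=
    (Finset.exists_min_image p.roots.toFinset (fun r => dist t r) hne).choose_spec
  exact ⟨Multiset.mem_toFinset.mp hmem, fun s hs => hmin s (Multiset.mem_toFinset.mpr hs)⟩

lemma pow_card_le_prod_real (s : Multiset ℝ) (a : ℝ) (ha : 0 ≤ a) (h : ∀ x ∈ s, a ≤ x) :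
    a ^ Multiset.card s ≤ s.prod := by
  induction s using Multiset.induction with
  | empty => simp
  | cons x s ih =>
    rw [Multiset.prod_cons, Multiset.card_cons, pow_succ, mul_comm (a ^ Multiset.card s) a]
    exact mul_le_mul (h x (Multiset.mem_cons_self x s))
      (ih fun y hy => h y (Multiset.mem_cons_of_mem hy)) (pow_nonneg ha _)
      (le_trans ha (h x (Multiset.mem_cons_self x s)))

lemma cluster {p : Polynomial ℂ} (hm : p.Monic) (hdeg : p.natDegree = 3)
    (t : Fin 3 → ℂ) (d ε A : ℝ) (hε : 0 < ε) (h3 : 3 * ε < d)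
    (hsep : ∀ j k : Fin 3, j ≠ k → d ≤ dist (t j) (t k))
    (hev : ∀ k, ‖p.eval (t k)‖ ≤ A) (hA : A ≤ ε ^ 3) :
    ∀ k, nrRoot p (t k) ∈ p.roots ∧ dist (t k) (nrRoot p (t k)) ≤ A / (d - ε) ^ 2 := by
  have hsplit : p.Splits := IsAlgClosed.splits p
  have hcard : p.roots.card = 3 := by rw [← hdeg]; exact splits_iff_card_roots.mp hsplit
  have hne : p.roots ≠ 0 := by intro h; rw [h] at hcard; simp at hcard
  set e : Fin 3 → ℂ := fun k => nrRoot p (t k) with he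
  have hmem : ∀ k, e k ∈ p.roots := fun k => (nrRoot_spec hne (t k)).1
  have hmin : ∀ k, ∀ s ∈ p.roots, dist (t k) (e k) ≤ dist (t k) s :=
    fun k => (nrRoot_spec hne (t k)).2
  have habs : ∀ x : ℂ, ‖p.eval x‖ = ((p.roots.map (fun r => dist x r)).prod) := by
    intro x
    have hnp : ∀ (s : Multiset ℂ), ‖s.prod‖ = (s.map (fun y => ‖y‖)).prod := fun s => by
      simpa using map_multiset_prod ((normHom : ℂ →*₀ ℝ).toMonoidHom) s
    conv_lhs => rw [hsplit.eq_prod_roots_of_monic hm]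
    rw [eval_multiset_prod, Multiset.map_map, hnp, Multiset.map_map]
    congr 1; apply Multiset.map_congr rfl
    intro r _; simp [dist_eq_norm]
  have hdist : ∀ k, dist (t k) (e k) ≤ ε := by
    intro k
    have hlow : ∀ x ∈ p.roots.map (fun r => dist (t k) r), dist (t k) (e k) ≤ x := by
      intro x hx
      obtain ⟨r, hr, rfl⟩ := Multiset.mem_map.mp hx
      exact hmin k r hr
    have h1 : dist (t k) (e k) ^ 3 ≤ ε ^ 3 := by
      calc dist (t k) (e k) ^ 3
          = dist (t k) (e k) ^ (Multiset.card (p.roots.map (fun r => dist (t k) r))) := by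
            rw [Multiset.card_map, hcard]
        _ ≤ (p.roots.map (fun r => dist (t k) r)).prod :=
            pow_card_le_prod_real _ _ dist_nonneg hlow
        _ = ‖p.eval (t k)‖ := (habs _).symm
        _ ≤ A := hev k
        _ ≤ ε ^ 3 := hA
    exact le_of_pow_le_pow_left₀ (by norm_num) hε.le h1
  have hinj : ∀ j k : Fin 3, j ≠ k → e j ≠ e k := by
    intro j k hjk heq
    have h1 := hsep j k hjk
    have h2 : dist (t j) (t k) ≤ dist (t j) (e j) + dist (e k) (t k) := by
      calc dist (t j) (t k) ≤ dist (t j) (e j) + dist (e j) (t k) := dist_triangle _ _ _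
        _ = dist (t j) (e j) + dist (e k) (t k) := by rw [heq, dist_comm]
    have h3j := hdist j; have h3k := hdist k
    rw [dist_comm (e k) (t k)] at h2
    linarith
  have c01 := hinj 0 1 (by decide); have c02 := hinj 0 2 (by decide)
  have c12 := hinj 1 2 (by decide)
  have hsub : ({e 0, e 1, e 2} : Multiset ℂ) ≤ p.roots := by
    rw [Multiset.le_iff_count]
    intro x
    by_cases h0 : x = e 0 <;> by_cases h1 : x = e 1 <;> by_cases h2 : x = e 2 <;>
      simp only [Multiset.insert_eq_cons, Multiset.count_cons, Multiset.count_singleton,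
        h0, h1, h2, if_true, if_false] <;>
      first
        | (exfalso; first
            | exact c01 (h0 ▸ h1 ▸ rfl)
            | exact c02 (h0 ▸ h2 ▸ rfl)
            | exact c12 (h1 ▸ h2 ▸ rfl))
        | skip
    all_goals try simp only [if_neg c01, if_neg c02, if_neg c12, if_neg (Ne.symm c01),
      if_neg (Ne.symm c02), if_neg (Ne.symm c12)]
    · simpa using Multiset.one_le_count_iff_mem.mpr (hmem 0)
    · simpa using Multiset.one_le_count_iff_mem.mpr (hmem 1)
    · simpa using Multiset.one_le_count_iff_mem.mpr (hmem 2)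
    · simp
  have heq3 : p.roots = ({e 0, e 1, e 2} : Multiset ℂ) :=
    (Multiset.eq_of_le_of_card_le hsub (by rw [hcard]; simp)).symm
  have hd : 0 < d - ε := by linarith
  intro k
  refine ⟨hmem k, ?_⟩
  have hfar : ∀ j : Fin 3, j ≠ k → d - ε ≤ dist (t k) (e j) := by
    intro j hjk
    have h1 := hsep k j (Ne.symm hjk)
    have h2 : dist (t k) (t j) ≤ dist (t k) (e j) + dist (t j) (e j) := by
      calc dist (t k) (t j) ≤ dist (t k) (e j) + dist (e j) (t j) := dist_triangle _ _ _
        _ = dist (t k) (e j) + dist (t j) (e j) := by rw [dist_comm (e j) (t j)]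
    have h3j := hdist j
    linarith
  have hprod : ‖p.eval (t k)‖ = dist (t k) (e 0) * (dist (t k) (e 1) * dist (t k) (e 2)) := by
    rw [habs, heq3]; simp
  rw [le_div_iff₀ (by positivity)]
  have hA' : dist (t k) (e k) * (d - ε) ^ 2 ≤ ‖p.eval (t k)‖ := by
    rw [hprod]
    have d0 := dist_nonneg (x := t k) (y := e 0)
    have d1 := dist_nonneg (x := t k) (y := e 1)
    have d2 := dist_nonneg (x := t k) (y := e 2)
    have hcases : k = 0 ∨ k = 1 ∨ k = 2 := by fin_cases k <;> decide
    rcases hcases with rfl | rfl | rfl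
    · have f1 := hfar 1 (by decide); have f2 := hfar 2 (by decide)
      have hyz : (d - ε) * (d - ε) ≤ dist (t 0) (e 1) * dist (t 0) (e 2) :=
        mul_le_mul f1 f2 hd.le d1
      nlinarith [mul_le_mul_of_nonneg_left hyz d0]
    · have f1 := hfar 0 (by decide); have f2 := hfar 2 (by decide)
      have hyz : (d - ε) * (d - ε) ≤ dist (t 1) (e 0) * dist (t 1) (e 2) :=
        mul_le_mul f1 f2 hd.le d0
      nlinarith [mul_le_mul_of_nonneg_left hyz d1]
    · have f1 := hfar 0 (by decide); have f2 := hfar 1 (by decide)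
      have hyz : (d - ε) * (d - ε) ≤ dist (t 2) (e 0) * dist (t 2) (e 1) :=
        mul_le_mul f1 f2 hd.le d0
      nlinarith [mul_le_mul_of_nonneg_left hyz d2]
  exact le_trans hA' (hev k)

lemma norm6 (x1 x2 x3 x4 x5 x6 : ℂ) :
    ‖x1 + x2 + x3 - x4 - x5 - x6‖ ≤ ‖x1‖ + ‖x2‖ + ‖x3‖ + ‖x4‖ + ‖x5‖ + ‖x6‖ := by
  calc ‖x1 + x2 + x3 - x4 - x5 - x6‖ ≤ ‖x1 + x2 + x3 - x4 - x5‖ + ‖x6‖ := norm_sub_le _ _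
    _ ≤ (‖x1 + x2 + x3 - x4‖ + ‖x5‖) + ‖x6‖ := by gcongr; exact norm_sub_le _ _
    _ ≤ ((‖x1 + x2 + x3‖ + ‖x4‖) + ‖x5‖) + ‖x6‖ := by gcongr; exact norm_sub_le _ _
    _ ≤ (((‖x1 + x2‖ + ‖x3‖) + ‖x4‖) + ‖x5‖) + ‖x6‖ := by gcongr; exact norm_add_le _ _
    _ ≤ ((((‖x1‖ + ‖x2‖) + ‖x3‖) + ‖x4‖) + ‖x5‖) + ‖x6‖ := by gcongr; exact norm_add_le _ _

lemma norm4 (x1 x2 x3 x4 : ℂ) :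
    ‖x1 + x2 - x3 - x4‖ ≤ ‖x1‖ + ‖x2‖ + ‖x3‖ + ‖x4‖ := by
  calc ‖x1 + x2 - x3 - x4‖ ≤ ‖x1 + x2 - x3‖ + ‖x4‖ := norm_sub_le _ _
    _ ≤ (‖x1 + x2‖ + ‖x3‖) + ‖x4‖ := by gcongr; exact norm_sub_le _ _
    _ ≤ ((‖x1‖ + ‖x2‖) + ‖x3‖) + ‖x4‖ := by gcongr; exact norm_add_le _ _

lemma norm6' (x1 x2 x3 x4 x5 x6 : ℂ) :
    ‖-x1 + x2 + x3 + x4 - x5 - x6‖ ≤ ‖x1‖ + ‖x2‖ + ‖x3‖ + ‖x4‖ + ‖x5‖ + ‖x6‖ := by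
  calc ‖-x1 + x2 + x3 + x4 - x5 - x6‖ ≤ ‖-x1 + x2 + x3 + x4 - x5‖ + ‖x6‖ := norm_sub_le _ _
    _ ≤ (‖-x1 + x2 + x3 + x4‖ + ‖x5‖) + ‖x6‖ := by gcongr; exact norm_sub_le _ _
    _ ≤ ((‖-x1 + x2 + x3‖ + ‖x4‖) + ‖x5‖) + ‖x6‖ := by gcongr; exact norm_add_le _ _
    _ ≤ (((‖-x1 + x2‖ + ‖x3‖) + ‖x4‖) + ‖x5‖) + ‖x6‖ := by gcongr; exact norm_add_le _ _
    _ ≤ ((((‖-x1‖ + ‖x2‖) + ‖x3‖) + ‖x4‖) + ‖x5‖) + ‖x6‖ := by gcongr; exact norm_add_le _ _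
    _ = ‖x1‖ + ‖x2‖ + ‖x3‖ + ‖x4‖ + ‖x5‖ + ‖x6‖ := by rw [norm_neg]

lemma cubic_norm_bound (lam a2 a1 a0 z : ℂ) :
    ‖lam * (a2 * z ^ 2 + a1 * z + lam * a0)‖ ≤
      ‖lam‖ * (‖a2‖ * ‖z‖ ^ 2 + ‖a1‖ * ‖z‖ + ‖lam‖ * ‖a0‖) := by
  rw [norm_mul]
  apply mul_le_mul_of_nonneg_left _ (norm_nonneg _)
  calc ‖a2 * z ^ 2 + a1 * z + lam * a0‖ ≤ ‖a2 * z ^ 2 + a1 * z‖ + ‖lam * a0‖ := norm_add_le _ _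
    _ ≤ (‖a2 * z ^ 2‖ + ‖a1 * z‖) + ‖lam * a0‖ := by gcongr; exact norm_add_le _ _
    _ = ‖a2‖ * ‖z‖ ^ 2 + ‖a1‖ * ‖z‖ + ‖lam‖ * ‖a0‖ := by
        rw [norm_mul, norm_mul, norm_mul, norm_pow]
set_option maxHeartbeats 1000000 in
theorem stmt16 (V : Matrix (Fin 3) (Fin 3) ℝ) (γ : ℝ) (hV : V 2 0 = γ) (hγ : γ ≠ 0) :
    let J : Matrix (Fin 3) (Fin 3) ℝ :=
      Matrix.of fun i j => if (j : ℕ) = (i : ℕ) + 1 then 1 else 0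
    let H : ℝ → Matrix (Fin 3) (Fin 3) ℝ := fun lam => J + lam • V
    let ω : ℂ := Complex.exp (2 * Real.pi * Complex.I / 3)
    let cbrt : ℝ := if 0 ≤ γ then γ ^ ((1 : ℝ) / 3) else -((-γ) ^ ((1 : ℝ) / 3))
    (∃ l0 > (0 : ℝ), ∀ lam ∈ Set.Ioo (0 : ℝ) l0, ∃ z : ℂ, z.im ≠ 0 ∧
      (Polynomial.aeval z) (Matrix.charpoly (H lam)) = 0 ∧
      (Polynomial.aeval (starRingEnd ℂ z)) (Matrix.charpoly (H lam)) = 0) ∧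
    (∃ E : ℝ → Fin 3 → ℂ, ∃ l0 > (0 : ℝ),
      (∀ lam ∈ Set.Ioo (0 : ℝ) l0, ∀ k : Fin 3,
        (Polynomial.aeval (E lam k)) (Matrix.charpoly (H lam)) = 0) ∧
      (∀ k : Fin 3,
        (fun lam : ℝ => E lam k - ω ^ (k : ℕ) * (cbrt : ℂ) * ((lam ^ ((1 : ℝ) / 3) : ℝ) : ℂ))
          =O[nhdsWithin 0 (Set.Ioi 0)]
            (fun lam : ℝ => lam ^ ((2 : ℝ) / 3)))) := by
  intro J H ω cbrt
  -- basic square root facts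
  have hs : Real.sqrt 3 ^ 2 = 3 := Real.sq_sqrt (by norm_num)
  have hs0 : 0 ≤ Real.sqrt 3 := Real.sqrt_nonneg 3
  have hs32 : (3:ℝ)/2 < Real.sqrt 3 := by nlinarith
  have hs1 : (1:ℝ) ≤ Real.sqrt 3 := by nlinarith
  -- ω facts
  have hωre : ω.re = -(1/2) := by
    show (Complex.exp (2 * Real.pi * Complex.I / 3)).re = -(1/2)
    have hz : (2 * (Real.pi:ℂ) * Complex.I / 3) = ((2 * Real.pi / 3 : ℝ) : ℂ) * Complex.I := by
      push_cast; ring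
    rw [hz, Complex.exp_ofReal_mul_I_re,
      show 2 * Real.pi / 3 = Real.pi - Real.pi / 3 by ring,
      Real.cos_pi_sub, Real.cos_pi_div_three]
  have hωim : ω.im = Real.sqrt 3 / 2 := by
    show (Complex.exp (2 * Real.pi * Complex.I / 3)).im = Real.sqrt 3 / 2
    have hz : (2 * (Real.pi:ℂ) * Complex.I / 3) = ((2 * Real.pi / 3 : ℝ) : ℂ) * Complex.I := by
      push_cast; ring
    rw [hz, Complex.exp_ofReal_mul_I_im,
      show 2 * Real.pi / 3 = Real.pi - Real.pi / 3 by ring,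
      Real.sin_pi_sub, Real.sin_pi_div_three]
  have hω2re : (ω ^ 2).re = -(1/2) := by
    rw [sq, Complex.mul_re, hωre, hωim]; linear_combination (-1/4) * hs
  have hω2im : (ω ^ 2).im = -(Real.sqrt 3 / 2) := by
    rw [sq, Complex.mul_im, hωre, hωim]; ring
  have hω3 : ω ^ 3 = 1 := by
    have h3 : ω ^ 3 = ω ^ 2 * ω := by ring
    apply Complex.ext
    · rw [h3, Complex.mul_re, hω2re, hω2im, hωre, hωim, Complex.one_re]
      linear_combination (1/4) * hs
    · rw [h3, Complex.mul_im, hω2re, hω2im, hωre, hωim, Complex.one_im]; ring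
  have hnorm1 : ‖ω‖ = 1 := by
    rw [Complex.norm_def, Complex.normSq_apply, hωre, hωim,
      show -(1/2) * -(1/2) + Real.sqrt 3 / 2 * (Real.sqrt 3 / 2) = 1 by linear_combination hs/4]
    exact Real.sqrt_one
  have habs' : ∀ x : ℂ, ‖x‖ = Real.sqrt (x.re * x.re + x.im * x.im) := fun x => by
    rw [Complex.norm_def, Complex.normSq_apply]
  have hd01 : ‖(1:ℂ) - ω‖ = Real.sqrt 3 := by
    rw [habs', Complex.sub_re, Complex.sub_im, Complex.one_re, Complex.one_im, hωre, hωim]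
    congr 1; linear_combination (1/4) * hs
  have hd02 : ‖(1:ℂ) - ω ^ 2‖ = Real.sqrt 3 := by
    rw [habs', Complex.sub_re, Complex.sub_im, Complex.one_re, Complex.one_im, hω2re, hω2im]
    congr 1; linear_combination (1/4) * hs
  have hd12 : ‖ω - ω ^ 2‖ = Real.sqrt 3 := by
    rw [habs', Complex.sub_re, Complex.sub_im, hωre, hωim, hω2re, hω2im]
    congr 1; linear_combination hs
  have hωkdiff : ∀ j k : Fin 3, j ≠ k → ‖ω ^ (j:ℕ) - ω ^ (k:ℕ)‖ = Real.sqrt 3 := by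
    intro j k hjk
    fin_cases j <;> fin_cases k
    · exact absurd rfl hjk
    · show ‖ω ^ (0:ℕ) - ω ^ (1:ℕ)‖ = Real.sqrt 3
      rw [pow_zero, pow_one]; exact hd01
    · show ‖ω ^ (0:ℕ) - ω ^ (2:ℕ)‖ = Real.sqrt 3
      rw [pow_zero]; exact hd02
    · show ‖ω ^ (1:ℕ) - ω ^ (0:ℕ)‖ = Real.sqrt 3
      rw [pow_zero, pow_one, norm_sub_rev]; exact hd01
    · exact absurd rfl hjk
    · show ‖ω ^ (1:ℕ) - ω ^ (2:ℕ)‖ = Real.sqrt 3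
      rw [pow_one]; exact hd12
    · show ‖ω ^ (2:ℕ) - ω ^ (0:ℕ)‖ = Real.sqrt 3
      rw [pow_zero, norm_sub_rev]; exact hd02
    · show ‖ω ^ (2:ℕ) - ω ^ (1:ℕ)‖ = Real.sqrt 3
      rw [pow_one, norm_sub_rev]; exact hd12
    · exact absurd rfl hjk
  -- cbrt facts
  have hcbrt3 : cbrt ^ 3 = γ := by
    show (if 0 ≤ γ then γ ^ ((1 : ℝ) / 3) else -((-γ) ^ ((1 : ℝ) / 3))) ^ 3 = γ
    by_cases h : 0 ≤ γ
    · rw [if_pos h, ← Real.rpow_natCast (γ ^ ((1:ℝ)/3)) 3, ← Real.rpow_mul h]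
      norm_num
    · rw [if_neg h]
      have h' : 0 ≤ -γ := by linarith [lt_of_not_ge h]
      have : ((-γ) ^ ((1:ℝ)/3)) ^ 3 = -γ := by
        rw [← Real.rpow_natCast ((-γ) ^ ((1:ℝ)/3)) 3, ← Real.rpow_mul h']
        norm_num
      nlinarith [this]
  have hcbrt_ne : cbrt ≠ 0 := by
    intro h
    apply hγ
    rw [← hcbrt3, h]; ring
  set c : ℝ := |cbrt| with hcdef
  have hcpos : 0 < c := abs_pos.mpr hcbrt_ne
  -- B and entry bounds
  set B : ℝ := 1 + ∑ i : Fin 3, ∑ j : Fin 3, |V i j| with hBdef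
  have hsum_nonneg : (0:ℝ) ≤ ∑ i : Fin 3, ∑ j : Fin 3, |V i j| := by positivity
  have hB1 : (1:ℝ) ≤ B := by rw [hBdef]; linarith
  have hB0 : (0:ℝ) < B := lt_of_lt_of_le one_pos hB1
  have hv : ∀ i j : Fin 3, ‖((V i j : ℝ) : ℂ)‖ ≤ B := by
    intro i j
    rw [Complex.norm_real, Real.norm_eq_abs]
    have h1 : |V i j| ≤ ∑ j' : Fin 3, |V i j'| :=
      Finset.single_le_sum (f := fun j' => |V i j'|) (fun j' _ => abs_nonneg _)
        (Finset.mem_univ j)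
    have h2 : (∑ j' : Fin 3, |V i j'|) ≤ ∑ i' : Fin 3, ∑ j' : Fin 3, |V i' j'| :=
      Finset.single_le_sum (f := fun i' => ∑ j' : Fin 3, |V i' j'|)
        (fun i' _ => Finset.sum_nonneg fun _ _ => abs_nonneg _) (Finset.mem_univ i)
    rw [hBdef]; linarith
  have hv2 : ∀ i j i' j' : Fin 3, ‖((V i j : ℝ) : ℂ) * ((V i' j' : ℝ) : ℂ)‖ ≤ B ^ 2 := by
    intro i j i' j'
    rw [norm_mul, sq]
    exact mul_le_mul (hv i j) (hv i' j') (norm_nonneg _) hB0.le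
  have hv3 : ∀ i j i' j' i'' j'' : Fin 3,
      ‖((V i j : ℝ) : ℂ) * ((V i' j' : ℝ) : ℂ) * ((V i'' j'' : ℝ) : ℂ)‖ ≤ B ^ 3 := by
    intro i j i' j' i'' j''
    rw [norm_mul, show (B:ℝ) ^ 3 = B ^ 2 * B by ring]
    exact mul_le_mul (hv2 i j i' j') (hv i'' j'') (norm_nonneg _) (by positivity)
  -- constants
  set C1 : ℝ := 3 * B * c ^ 2 + 8 * B ^ 2 * c + 10 * B ^ 3 with hC1def
  have hC1 : 0 < C1 := by positivity
  set C4 : ℝ := C1 / c ^ 2 with hC4def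
  have hC4 : 0 < C4 := by positivity
  set m : ℝ := c ^ 3 / (8 * C1) with hmdef
  have hm0 : 0 < m := by positivity
  set l0 : ℝ := min 1 (m ^ 3) with hl0def
  have hl0 : 0 < l0 := by positivity
  clear_value l0
  clear_value m
  clear_value C4
  clear_value C1
  -- key charpoly identity
  have hkey : ∀ (lam : ℝ) (z : ℂ),
      (Polynomial.aeval z) (Matrix.charpoly (H lam)) =
      z ^ 3 - (V 2 0 : ℂ) * (lam : ℂ) + (lam : ℂ) *
        ((-((V 0 0 : ℂ) + (V 1 1 : ℂ) + (V 2 2 : ℂ))) * z ^ 2 +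
         (-((V 1 0 : ℂ) + (V 2 1 : ℂ)) + (lam : ℂ) *
            ((V 0 0 : ℂ) * (V 1 1 : ℂ) + (V 0 0 : ℂ) * (V 2 2 : ℂ) + (V 1 1 : ℂ) * (V 2 2 : ℂ)
              - (V 1 2 : ℂ) * (V 2 1 : ℂ) - (V 0 1 : ℂ) * (V 1 0 : ℂ)
              - (V 2 0 : ℂ) * (V 0 2 : ℂ))) * z +
         (lam : ℂ) *
           (((V 0 0 : ℂ) * (V 2 1 : ℂ) + (V 2 2 : ℂ) * (V 1 0 : ℂ)
              - (V 1 2 : ℂ) * (V 2 0 : ℂ) - (V 0 1 : ℂ) * (V 2 0 : ℂ)) +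
            (lam : ℂ) *
              (-((V 0 0 : ℂ) * (V 1 1 : ℂ) * (V 2 2 : ℂ))
                + (V 0 0 : ℂ) * (V 1 2 : ℂ) * (V 2 1 : ℂ)
                + (V 1 1 : ℂ) * (V 2 0 : ℂ) * (V 0 2 : ℂ)
                + (V 2 2 : ℂ) * (V 0 1 : ℂ) * (V 1 0 : ℂ)
                - (V 1 2 : ℂ) * (V 0 1 : ℂ) * (V 2 0 : ℂ)
                - (V 2 1 : ℂ) * (V 1 0 : ℂ) * (V 0 2 : ℂ)))) := by
    intro lam z
    show (Polynomial.aeval z) (Matrix.charpoly (J + lam • V)) = _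
    rw [Matrix.charpoly, Matrix.det_fin_three]
    simp only [charmatrix_apply, Matrix.diagonal_apply, Matrix.add_apply, Matrix.smul_apply,
      Matrix.of_apply, smul_eq_mul, Fin.isValue, ne_eq, map_add, map_sub, _root_.map_mul,
      map_neg, aeval_X, aeval_C, J]
    simp
    ring
  -- the nearest-root function
  set E : ℝ → Fin 3 → ℂ := fun lam k =>
    nrRoot (((H lam).charpoly).map (algebraMap ℝ ℂ))
      (ω ^ (k:ℕ) * (cbrt : ℂ) * ((lam ^ ((1 : ℝ) / 3) : ℝ) : ℂ)) with hEdef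
  -- main estimate
  have main : ∀ lam ∈ Set.Ioo (0:ℝ) l0,
      (∀ k : Fin 3,
        (Polynomial.aeval (E lam k)) (Matrix.charpoly (H lam)) = 0 ∧
        dist (ω ^ (k:ℕ) * (cbrt : ℂ) * ((lam ^ ((1 : ℝ) / 3) : ℝ) : ℂ)) (E lam k)
          ≤ C4 * (lam ^ ((1 : ℝ) / 3)) ^ 2) ∧
      (E lam 1).im ≠ 0 := by
    intro lam hlam
    obtain ⟨hlam0, hlaml0⟩ := hlam
    set u : ℝ := lam ^ ((1:ℝ)/3) with hudef
    have hu0 : 0 < u := Real.rpow_pos_of_pos hlam0 _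
    have hu3 : u ^ 3 = lam := by
      rw [hudef, ← Real.rpow_natCast (lam ^ ((1:ℝ)/3)) 3, ← Real.rpow_mul hlam0.le]
      norm_num
    have hl0le1 : l0 ≤ 1 := by rw [hl0def]; exact min_le_left _ _
    have hl0lem : l0 ≤ m ^ 3 := by rw [hl0def]; exact min_le_right _ _
    have hlam1 : lam < 1 := lt_of_lt_of_le hlaml0 hl0le1
    have hu1 : u ≤ 1 := by
      by_contra h
      push_neg at h
      have h13 : 1 < u ^ 3 := one_lt_pow₀ h (by norm_num)
      linarith
    have hum : u < m := by
      have h2 : lam < m ^ 3 := lt_of_lt_of_le hlaml0 hl0lem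
      by_contra h
      push_neg at h
      have : m ^ 3 ≤ u ^ 3 := pow_le_pow_left₀ hm0.le h 3
      linarith [hu3 ▸ this]
    set q : Polynomial ℂ := ((H lam).charpoly).map (algebraMap ℝ ℂ) with hqdef
    have hqm : q.Monic := (Matrix.charpoly_monic _).map _
    have hqd : q.natDegree = 3 := by
      rw [hqdef, (Matrix.charpoly_monic _).natDegree_map, Matrix.charpoly_natDegree_eq_dim]
      simp
    have hqne : q ≠ 0 := hqm.ne_zero
    set t : Fin 3 → ℂ := fun k => ω ^ (k:ℕ) * (cbrt : ℂ) * ((u : ℝ) : ℂ) with htdef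
    have htabs : ∀ k, ‖t k‖ = c * u := by
      intro k
      rw [htdef]
      simp only [norm_mul, norm_pow, hnorm1, one_pow, one_mul, Complex.norm_real,
        Real.norm_eq_abs]
      rw [abs_of_pos hu0]
    have ht3 : ∀ k, (t k) ^ 3 = ((V 2 0 : ℝ) : ℂ) * (lam : ℂ) := by
      intro k
      rw [hV]
      have h1 : (t k) ^ 3 = (ω ^ 3) ^ (k:ℕ) * ((cbrt : ℝ):ℂ) ^ 3 * (((u:ℝ)):ℂ) ^ 3 := by
        rw [htdef]; ring
      rw [h1, hω3, one_pow, one_mul, ← Complex.ofReal_pow, ← Complex.ofReal_pow,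
        hcbrt3, hu3]
    have hqeval : ∀ z : ℂ, q.eval z = (Polynomial.aeval z) (Matrix.charpoly (H lam)) := by
      intro z
      rw [hqdef, Polynomial.eval_map, Polynomial.aeval_def]
    -- eval bound
    have heval : ∀ k, ‖q.eval (t k)‖ ≤ C1 * u ^ 4 := by
      intro k
      rw [hqeval, hkey lam (t k)]
      have hcanc : (t k) ^ 3 - (V 2 0 : ℂ) * (lam : ℂ) = 0 := by
        rw [ht3 k]; ring
      rw [hcanc, zero_add]
      have hlnorm : ‖((lam : ℝ) : ℂ)‖ = lam := by
        rw [Complex.norm_real, Real.norm_eq_abs, abs_of_pos hlam0]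
      have hQ2 : ‖-((V 0 0 : ℂ) + (V 1 1 : ℂ) + (V 2 2 : ℂ))‖ ≤ 3 * B := by
        rw [norm_neg]
        calc ‖(V 0 0 : ℂ) + (V 1 1 : ℂ) + (V 2 2 : ℂ)‖
            ≤ ‖(V 0 0 : ℂ) + (V 1 1 : ℂ)‖ + ‖(V 2 2 : ℂ)‖ := norm_add_le _ _
          _ ≤ (‖(V 0 0 : ℂ)‖ + ‖(V 1 1 : ℂ)‖) + ‖(V 2 2 : ℂ)‖ := by
              gcongr; exact norm_add_le _ _
          _ ≤ B + B + B := by gcongr <;> [exact hv 0 0; exact hv 1 1; exact hv 2 2]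
          _ = 3 * B := by ring
      have hQ1 : ‖(-((V 1 0 : ℂ) + (V 2 1 : ℂ)) + (lam : ℂ) *
            ((V 0 0 : ℂ) * (V 1 1 : ℂ) + (V 0 0 : ℂ) * (V 2 2 : ℂ) + (V 1 1 : ℂ) * (V 2 2 : ℂ)
              - (V 1 2 : ℂ) * (V 2 1 : ℂ) - (V 0 1 : ℂ) * (V 1 0 : ℂ)
              - (V 2 0 : ℂ) * (V 0 2 : ℂ)))‖ ≤ 8 * B ^ 2 := by
        have h6 : ‖(V 0 0 : ℂ) * (V 1 1 : ℂ) + (V 0 0 : ℂ) * (V 2 2 : ℂ)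
              + (V 1 1 : ℂ) * (V 2 2 : ℂ) - (V 1 2 : ℂ) * (V 2 1 : ℂ)
              - (V 0 1 : ℂ) * (V 1 0 : ℂ) - (V 2 0 : ℂ) * (V 0 2 : ℂ)‖ ≤ 6 * B ^ 2 := by
          calc ‖_‖ ≤ _ := norm6 _ _ _ _ _ _
            _ ≤ B^2 + B^2 + B^2 + B^2 + B^2 + B^2 := by
                gcongr <;> apply hv2
            _ = 6 * B ^ 2 := by ring
        calc ‖_ + _‖ ≤ ‖-((V 1 0 : ℂ) + (V 2 1 : ℂ))‖ + ‖(lam : ℂ) * _‖ := norm_add_le _ _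
          _ ≤ (‖(V 1 0 : ℂ)‖ + ‖(V 2 1 : ℂ)‖) + ‖((lam:ℝ):ℂ)‖ * (6 * B ^ 2) := by
              refine add_le_add ?_ ?_
              · rw [norm_neg]; exact norm_add_le _ _
              · rw [norm_mul]
                exact mul_le_mul_of_nonneg_left h6 (norm_nonneg _)
          _ ≤ (B + B) + 1 * (6 * B ^ 2) := by
              refine add_le_add (add_le_add (hv 1 0) (hv 2 1)) ?_
              refine mul_le_mul_of_nonneg_right ?_ (by positivity)
              rw [hlnorm]; linarith
          _ ≤ 8 * B ^ 2 := by
              have hBB : B * 1 ≤ B * B := mul_le_mul_of_nonneg_left hB1 hB0.le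
              have hBsq : B * B = B ^ 2 := by ring
              linarith
      have hQ3 : ‖(((V 0 0 : ℂ) * (V 2 1 : ℂ) + (V 2 2 : ℂ) * (V 1 0 : ℂ)
              - (V 1 2 : ℂ) * (V 2 0 : ℂ) - (V 0 1 : ℂ) * (V 2 0 : ℂ)) +
            (lam : ℂ) *
              (-((V 0 0 : ℂ) * (V 1 1 : ℂ) * (V 2 2 : ℂ))
                + (V 0 0 : ℂ) * (V 1 2 : ℂ) * (V 2 1 : ℂ)
                + (V 1 1 : ℂ) * (V 2 0 : ℂ) * (V 0 2 : ℂ)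
                + (V 2 2 : ℂ) * (V 0 1 : ℂ) * (V 1 0 : ℂ)
                - (V 1 2 : ℂ) * (V 0 1 : ℂ) * (V 2 0 : ℂ)
                - (V 2 1 : ℂ) * (V 1 0 : ℂ) * (V 0 2 : ℂ)))‖ ≤ 10 * B ^ 3 := by
        have h4 : ‖(V 0 0 : ℂ) * (V 2 1 : ℂ) + (V 2 2 : ℂ) * (V 1 0 : ℂ)
              - (V 1 2 : ℂ) * (V 2 0 : ℂ) - (V 0 1 : ℂ) * (V 2 0 : ℂ)‖ ≤ 4 * B ^ 2 := by
          calc ‖_‖ ≤ _ := norm4 _ _ _ _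
            _ ≤ B^2 + B^2 + B^2 + B^2 := by gcongr <;> apply hv2
            _ = 4 * B ^ 2 := by ring
        have h6 : ‖-((V 0 0 : ℂ) * (V 1 1 : ℂ) * (V 2 2 : ℂ))
                + (V 0 0 : ℂ) * (V 1 2 : ℂ) * (V 2 1 : ℂ)
                + (V 1 1 : ℂ) * (V 2 0 : ℂ) * (V 0 2 : ℂ)
                + (V 2 2 : ℂ) * (V 0 1 : ℂ) * (V 1 0 : ℂ)
                - (V 1 2 : ℂ) * (V 0 1 : ℂ) * (V 2 0 : ℂ)
                - (V 2 1 : ℂ) * (V 1 0 : ℂ) * (V 0 2 : ℂ)‖ ≤ 6 * B ^ 3 := by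
          calc ‖_‖ ≤ _ := norm6' _ _ _ _ _ _
            _ ≤ B^3 + B^3 + B^3 + B^3 + B^3 + B^3 := by gcongr <;> apply hv3
            _ = 6 * B ^ 3 := by ring
        calc ‖_ + _‖ ≤ ‖_‖ + ‖(lam : ℂ) * _‖ := norm_add_le _ _
          _ ≤ 4 * B ^ 2 + ‖((lam:ℝ):ℂ)‖ * (6 * B ^ 3) := by
              refine add_le_add h4 ?_
              rw [norm_mul]
              exact mul_le_mul_of_nonneg_left h6 (norm_nonneg _)
          _ ≤ 4 * B ^ 2 + 1 * (6 * B ^ 3) := by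
              refine add_le_add le_rfl ?_
              refine mul_le_mul_of_nonneg_right ?_ (by positivity)
              rw [hlnorm]; linarith
          _ ≤ 10 * B ^ 3 := by
              have hBB : B ^ 2 * 1 ≤ B ^ 2 * B := mul_le_mul_of_nonneg_left hB1 (by positivity)
              have hcube : B ^ 2 * B = B ^ 3 := by ring
              linarith
      calc ‖_‖ ≤ ‖((lam:ℝ):ℂ)‖ * (‖-((V 0 0 : ℂ) + (V 1 1 : ℂ) + (V 2 2 : ℂ))‖ * ‖t k‖ ^ 2
              + ‖(-((V 1 0 : ℂ) + (V 2 1 : ℂ)) + (lam : ℂ) * _)‖ * ‖t k‖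
              + ‖((lam:ℝ):ℂ)‖ * ‖_ + (lam : ℂ) * _‖) := cubic_norm_bound _ _ _ _ _
        _ ≤ lam * ((3 * B) * (c * u) ^ 2 + (8 * B ^ 2) * (c * u) + lam * (10 * B ^ 3)) := by
            rw [hlnorm, htabs k]
            refine mul_le_mul_of_nonneg_left ?_ hlam0.le
            refine add_le_add (add_le_add ?_ ?_) ?_
            · exact mul_le_mul_of_nonneg_right hQ2 (by positivity)
            · exact mul_le_mul_of_nonneg_right hQ1 (by positivity)
            · exact mul_le_mul_of_nonneg_left hQ3 hlam0.le
        _ ≤ C1 * u ^ 4 := by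
            rw [← hu3, hC1def]
            have h5 : u ^ 5 ≤ u ^ 4 := pow_le_pow_of_le_one hu0.le hu1 (by norm_num)
            have h6 : u ^ 6 ≤ u ^ 4 := pow_le_pow_of_le_one hu0.le hu1 (by norm_num)
            have t1 : 3 * B * c ^ 2 * u ^ 5 ≤ 3 * B * c ^ 2 * u ^ 4 :=
              mul_le_mul_of_nonneg_left h5 (by positivity)
            have t3 : 10 * B ^ 3 * u ^ 6 ≤ 10 * B ^ 3 * u ^ 4 :=
              mul_le_mul_of_nonneg_left h6 (by positivity)
            calc u ^ 3 * (3 * B * (c * u) ^ 2 + 8 * B ^ 2 * (c * u) + u ^ 3 * (10 * B ^ 3))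
                = 3 * B * c ^ 2 * u ^ 5 + 8 * B ^ 2 * c * u ^ 4 + 10 * B ^ 3 * u ^ 6 := by
                  ring
              _ ≤ 3 * B * c ^ 2 * u ^ 4 + 8 * B ^ 2 * c * u ^ 4 + 10 * B ^ 3 * u ^ 4 := by
                  linarith
              _ = (3 * B * c ^ 2 + 8 * B ^ 2 * c + 10 * B ^ 3) * u ^ 4 := by ring
    -- apply cluster
    set d : ℝ := Real.sqrt 3 * c * u with hddef
    set ε : ℝ := (c / 2) * u with hεdef
    have hε : 0 < ε := by positivity
    have hcu0 : (0:ℝ) < c * u := by positivity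
    have h3ε : 3 * ε < d := by
      rw [hεdef, hddef]
      have hint := mul_lt_mul_of_pos_right hs32 hcu0
      linarith
    have hsep : ∀ j k : Fin 3, j ≠ k → d ≤ dist (t j) (t k) := by
      intro j k hjk
      have hfac : t j - t k = (ω ^ (j:ℕ) - ω ^ (k:ℕ)) * ((cbrt : ℂ) * ((u:ℝ):ℂ)) := by
        rw [htdef]; ring
      rw [dist_eq_norm, hfac, norm_mul, hωkdiff j k hjk, norm_mul, Complex.norm_real,
        Complex.norm_real, Real.norm_eq_abs, Real.norm_eq_abs, abs_of_pos hu0, hddef, ← hcdef]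
      apply le_of_eq; ring
    have hA : C1 * u ^ 4 ≤ ε ^ 3 := by
      have h1 : C1 * u ≤ c ^ 3 / 8 := by
        have h1' : C1 * u ≤ C1 * m := mul_le_mul_of_nonneg_left hum.le hC1.le
        have h2' : C1 * m = c ^ 3 / 8 := by
          rw [hmdef]
          field_simp
        linarith
      have h3 : C1 * u ^ 4 = (C1 * u) * u ^ 3 := by ring
      have h4 : ε ^ 3 = c ^ 3 / 8 * u ^ 3 := by rw [hεdef]; ring
      rw [h3, h4]
      exact mul_le_mul_of_nonneg_right h1 (by positivity)
    have hcl := cluster hqm hqd t d ε (C1 * u ^ 4) hε h3ε hsep heval hA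
    have hroot : ∀ k : Fin 3, (Polynomial.aeval (E lam k)) (Matrix.charpoly (H lam)) = 0 := by
      intro k
      have hmem := (hcl k).1
      have hir := (Polynomial.mem_roots hqne).mp hmem
      rw [← hqeval]
      exact hir
    have hdistb : ∀ k : Fin 3, dist (t k) (E lam k) ≤ C4 * u ^ 2 := by
      intro k
      have h1 := (hcl k).2
      have hcu : c * u ≤ d - ε := by
        rw [hddef, hεdef]
        have hint := mul_le_mul_of_nonneg_right hs32.le hcu0.le
        linarith
      have h2 : C1 * u ^ 4 / (d - ε) ^ 2 ≤ C1 * u ^ 4 / (c * u) ^ 2 :=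
        div_le_div_of_nonneg_left (by positivity) (by positivity)
          (pow_le_pow_left₀ (by positivity) hcu 2)
      have h3 : C1 * u ^ 4 / (c * u) ^ 2 = C4 * u ^ 2 := by
        rw [hC4def]
        field_simp
      calc dist (t k) (E lam k) ≤ C1 * u ^ 4 / (d - ε) ^ 2 := h1
        _ ≤ C1 * u ^ 4 / (c * u) ^ 2 := h2
        _ = C4 * u ^ 2 := h3
    refine ⟨fun k => ⟨hroot k, hdistb k⟩, ?_⟩
    -- imaginary part of E lam 1 nonzero
    have ht1im : (t 1).im = Real.sqrt 3 / 2 * (cbrt * u) := by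
      have h1 : t 1 = ω * ((cbrt * u : ℝ) : ℂ) := by
        rw [htdef]; push_cast
        rw [show ((1 : Fin 3) : ℕ) = 1 from rfl, pow_one, mul_assoc]
      rw [h1, Complex.mul_im, Complex.ofReal_re, Complex.ofReal_im, hωim]
      ring
    have ht1im_abs : |(t 1).im| = Real.sqrt 3 / 2 * (c * u) := by
      rw [ht1im, abs_mul, abs_mul, abs_of_pos hu0, abs_of_pos (by positivity : (0:ℝ) < Real.sqrt 3 / 2), hcdef]
    intro him0
    have himd : |(t 1).im - (E lam 1).im| ≤ dist (t 1) (E lam 1) := by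
      rw [dist_eq_norm, ← Complex.sub_im]
      exact Complex.abs_im_le_norm _
    rw [him0, sub_zero, ht1im_abs] at himd
    -- contradiction
    have hfin : Real.sqrt 3 / 2 * (c * u) ≤ C4 * u ^ 2 := le_trans himd (hdistb 1)
    have hC4u : C4 * u < c / 8 := by
      have h1 : C4 * u < C4 * m := mul_lt_mul_of_pos_left hum hC4
      have h2 : C4 * m = c / 8 := by
        rw [hC4def, hmdef]
        field_simp
      linarith
    have hint1 : 1 * (c * u) ≤ Real.sqrt 3 * (c * u) :=
      mul_le_mul_of_nonneg_right hs1 hcu0.le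
    have hint2 := mul_lt_mul_of_pos_right hC4u hu0
    linarith
  -- assemble
  refine ⟨⟨l0, hl0, ?_⟩, ⟨E, l0, hl0, ?_, ?_⟩⟩
  · intro lam hlam
    obtain ⟨hroots, him⟩ := main lam hlam
    refine ⟨E lam 1, him, (hroots 1).1, ?_⟩
    have hconj : (Polynomial.aeval ((starRingEnd ℂ) (E lam 1))) (Matrix.charpoly (H lam)) =
        (starRingEnd ℂ) ((Polynomial.aeval (E lam 1)) (Matrix.charpoly (H lam))) := by
      rw [← Complex.conjAe_coe]
      exact Polynomial.aeval_algHom_apply Complex.conjAe (E lam 1) (Matrix.charpoly (H lam))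
    rw [hconj, (hroots 1).1, map_zero]
  · intro lam hlam k
    exact ((main lam hlam).1 k).1
  · intro k
    rw [Asymptotics.isBigO_iff]
    refine ⟨C4, ?_⟩
    filter_upwards [Ioo_mem_nhdsGT hl0] with lam hlam
    have hb := ((main lam hlam).1 k).2
    have h23 : lam ^ ((2:ℝ)/3) = (lam ^ ((1:ℝ)/3)) ^ 2 := by
      rw [← Real.rpow_natCast (lam ^ ((1:ℝ)/3)) 2, ← Real.rpow_mul hlam.1.le]
      norm_num
    have hnn : (0:ℝ) ≤ lam ^ ((2:ℝ)/3) := Real.rpow_nonneg hlam.1.le _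
    calc ‖E lam k - ω ^ (k:ℕ) * (cbrt : ℂ) * ((lam ^ ((1 : ℝ) / 3) : ℝ) : ℂ)‖
        = dist (ω ^ (k:ℕ) * (cbrt : ℂ) * ((lam ^ ((1 : ℝ) / 3) : ℝ) : ℂ)) (E lam k) := by
          rw [dist_eq_norm, norm_sub_rev]
      _ ≤ C4 * (lam ^ ((1:ℝ)/3)) ^ 2 := hb
      _ = C4 * ‖lam ^ ((2:ℝ)/3)‖ := by
          rw [Real.norm_eq_abs, _root_.abs_of_nonneg hnn, h23]
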